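/- For every ICA structure S there exists a set X of ICA structures such that the formula F ∧ ¬τ^S is logically equivalent (satisfied by exactly the same 2-valued structures) to the formula γ̂_c(X) = F ∧ (⋁_{S' ∈ X} τ^{S'}). In other words, the class of characteristic formulas for canonical abstraction is closed under negation relative to F. -/

import Mathlib

/-!
Common framework: 2-valued and 3-valued logical structures over a relational
vocabulary with a designated binary equality predicate, embedding, first-order
formulas with transitive closure and their Tarskian semantics, characteristic
formulas, canonical abstraction.
-/

namespace HeapAbs

/-- The three truth values 0, 1/2, 1. -/
inductive TV : Type
  | zero
  | half
  | one
  deriving DecidableEq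

/-- Information order on truth values: `l1 ⊑ l2` iff `l1 = l2` or `l2 = 1/2`. -/
def TV.le (a b : TV) : Prop := a = b ∨ b = TV.half

/-- `v` is the least upper bound (join) of the set `A` in the information order. -/
def TV.IsJoin (A : Set TV) (v : TV) : Prop :=
  (∀ a ∈ A, TV.le a v) ∧ ∀ w, (∀ a ∈ A, TV.le a w) → TV.le v w

/-- A (relational) vocabulary: a set of predicate symbols with arities and a
designated binary equality symbol. -/
structure Voc : Type 1 where
  rel : Type
  ar : rel → ℕ
  eqr : rel
  eq_ar : ar eqr = 2

/-- The pair `(u, v)` as a tuple (used for binary predicates). -/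
def pair {α : Type _} {n : ℕ} (u v : α) : Fin n → α :=
  fun i => if (i : ℕ) = 0 then u else v

/-- A 3-valued logical structure over the vocabulary `σ`. -/
structure Str3 (σ : Voc) : Type 1 where
  U : Type
  ι : (r : σ.rel) → (Fin (σ.ar r) → U) → TV
  eq_refl : ∀ u : U, ι σ.eqr (pair u u) ≠ TV.zero
  eq_ne : ∀ u v : U, u ≠ v → ι σ.eqr (pair u v) = TV.zero

/-- A 2-valued logical structure over `σ`: all predicate values are definite and
the equality symbol is interpreted as true equality. -/
structure Str2 (σ : Voc) : Type 1 where
  U : Type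
  ι : (r : σ.rel) → (Fin (σ.ar r) → U) → Bool
  eq_iff : ∀ u v : U, ι σ.eqr (pair u v) = true ↔ u = v

/-- The value of a predicate of a 2-valued structure, seen as a truth value. -/
def Str2.tv {σ : Voc} (C : Str2 σ) (r : σ.rel) (t : Fin (σ.ar r) → C.U) : TV :=
  if C.ι r t then TV.one else TV.zero

/-- `f` embeds the 2-valued structure `C` into the 3-valued structure `S`:
`f` is surjective and every predicate value of `C` is ⊑ the corresponding
value of `S`. -/
def Embeds {σ : Voc} (C : Str2 σ) (S : Str3 σ) (f : C.U → S.U) : Prop :=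
  Function.Surjective f ∧
    ∀ (r : σ.rel) (t : Fin (σ.ar r) → C.U), TV.le (C.tv r t) (S.ι r (f ∘ t))

/-- First-order formulas with transitive closure over vocabulary `σ`, with
free variables drawn from `V`. -/
inductive Fml (σ : Voc) : Type → Type 1 where
  | tru {V : Type} : Fml σ V
  | atom {V : Type} (r : σ.rel) (ts : Fin (σ.ar r) → V) : Fml σ V
  | not {V : Type} : Fml σ V → Fml σ V
  | or {V : Type} : Fml σ V → Fml σ V → Fml σ V
  | ex {V : Type} : Fml σ (Option V) → Fml σ V
  | tc {V : Type} (φ : Fml σ (Option (Option V))) (a b : V) : Fml σ V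

/-- Tarskian satisfaction of a formula in a 2-valued structure under an
assignment `ρ` of the free variables. -/
def Str2.Sat {σ : Voc} (C : Str2 σ) : {V : Type} → (V → C.U) → Fml σ V → Prop
  | _, _, .tru => True
  | _, ρ, .atom r ts => C.ι r (ρ ∘ ts) = true
  | _, ρ, .not φ => ¬ C.Sat ρ φ
  | _, ρ, .or φ ψ => C.Sat ρ φ ∨ C.Sat ρ ψ
  | _, ρ, .ex φ => ∃ m : C.U, C.Sat (fun v => Option.elim v m ρ) φ
  | _, ρ, .tc φ a b =>
      Relation.TransGen
        (fun x y => C.Sat (fun v => Option.elim v y (fun v' => Option.elim v' x ρ)) φ)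
        (ρ a) (ρ b)

/-- Satisfaction of a closed formula. -/
def SatC {σ : Voc} (C : Str2 σ) (φ : Fml σ Empty) : Prop :=
  C.Sat (fun x => x.elim) φ

namespace Fml

def fls {σ : Voc} {V : Type} : Fml σ V := .not .tru

def and {σ : Voc} {V : Type} (φ ψ : Fml σ V) : Fml σ V := .not (.or (.not φ) (.not ψ))

def imp {σ : Voc} {V : Type} (φ ψ : Fml σ V) : Fml σ V := .or (.not φ) ψ

def all {σ : Voc} {V : Type} (φ : Fml σ (Option V)) : Fml σ V := .not (.ex (.not φ))

def conj {σ : Voc} {V : Type} (l : List (Fml σ V)) : Fml σ V := l.foldr .and .tru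

def disj {σ : Voc} {V : Type} (l : List (Fml σ V)) : Fml σ V := l.foldr .or .fls

/-- Renaming of free variables. -/
def map {σ : Voc} : {V W : Type} → (V → W) → Fml σ V → Fml σ W
  | _, _, _, .tru => .tru
  | _, _, g, .atom r ts => .atom r (g ∘ ts)
  | _, _, g, .not φ => .not (φ.map g)
  | _, _, g, .or φ ψ => .or (φ.map g) (ψ.map g)
  | _, _, g, .ex φ => .ex (φ.map (Option.map g))
  | _, _, g, .tc φ a b => .tc (φ.map (Option.map (Option.map g))) (g a) (g b)

end Fml

/-- The characteristic formula `p^B` of the truth value `B` for the predicate `p`: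
`p^0 := ¬p`, `p^1 := p`, `p^{1/2} := true`. -/
def charFml {σ : Voc} {V : Type} (p : σ.rel) (ts : Fin (σ.ar p) → V) : TV → Fml σ V
  | TV.zero => .not (.atom p ts)
  | TV.one => .atom p ts
  | TV.half => .tru

/-- `node` is a family of node formulas (one per node of `S`, with a single free
variable `w`) witnessing that `S` is FO-identifiable: for every 2-valued `C`
embedding into `S` via `f` and every concrete node `uh`, `f uh = u` iff `C`
satisfies `node u` under `[w ↦ uh]`. -/
def IsNodeFamily {σ : Voc} (S : Str3 σ) (node : S.U → Fml σ Unit) : Prop :=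
  ∀ (C : Str2 σ) (f : C.U → S.U), Embeds C S f →
    ∀ (uh : C.U) (u : S.U), f uh = u ↔ C.Sat (fun _ => uh) (node u)

/-- `S` is FO-identifiable. -/
def FOIdentifiable {σ : Voc} (S : Str3 σ) : Prop :=
  ∃ node : S.U → Fml σ Unit, IsNodeFamily S node

/-- Mutual exclusivity of a family of node formulas: in every 2-valued structure
that embeds into `S`, every concrete node satisfies at most one node formula. -/
def MutExcl {σ : Voc} (S : Str3 σ) (node : S.U → Fml σ Unit) : Prop :=
  ∀ C : Str2 σ, (∃ f : C.U → S.U, Embeds C S f) →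
    ∀ (uh : C.U) (u1 u2 : S.U), u1 ≠ u2 →
      ¬ (C.Sat (fun _ => uh) (node u1) ∧ C.Sat (fun _ => uh) (node u2))

/-- `S` is a bounded structure: any two distinct nodes are distinguished by a
unary predicate having distinct definite values on them. -/
def Bounded {σ : Voc} (S : Str3 σ) : Prop :=
  ∀ u1 u2 : S.U, u1 ≠ u2 →
    ∃ p : σ.rel, σ.ar p = 1 ∧
      S.ι p (fun _ => u1) ≠ S.ι p (fun _ => u2) ∧
      S.ι p (fun _ => u1) ≠ TV.half ∧ S.ι p (fun _ => u2) ≠ TV.half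

/-- The node formula `node^S_u(w) := ⋀_{p unary} p^{ι^S(p)(u)}(w)`. -/
noncomputable def boundedNode {σ : Voc} [Fintype σ.rel] (S : Str3 σ) (u : S.U) : Fml σ Unit :=
  Fml.conj
    (((Finset.univ : Finset {p : σ.rel // σ.ar p = 1}).toList).map
      (fun p => charFml p.1 (fun _ => ()) (S.ι p.1 (fun _ => u))))

/-- The conjunction `⋀_j node_{t j}(w_j)` over the components of a tuple of
abstract nodes, as a formula with free variables `w_1, …, w_n`. -/
def nodeTuple {σ : Voc} (S : Str3 σ) (node : S.U → Fml σ Unit) {n : ℕ}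
    (t : Fin n → S.U) : Fml σ (Fin n) :=
  Fml.conj (List.ofFn fun j : Fin n => (node (t j)).map (fun _ => j))

/-- Universal closure of a formula with `n` free variables. -/
def closeAll {σ : Voc} : {n : ℕ} → Fml σ (Fin n) → Fml σ Empty
  | 0, φ => φ.map Fin.elim0
  | _ + 1, φ =>
      closeAll (Fml.all (φ.map (fun i => Fin.lastCases none (fun j => some j) i)))

/-- Existential closure of a formula with `n` free variables. -/
def closeEx {σ : Voc} : {n : ℕ} → Fml σ (Fin n) → Fml σ Empty
  | 0, φ => φ.map Fin.elim0
  | _ + 1, φ =>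
      closeEx (Fml.ex (φ.map (fun i => Fin.lastCases none (fun j => some j) i)))

/-- `∃ v : node_u(v)`. -/
noncomputable def existsNode {σ : Voc} (S : Str3 σ) (node : S.U → Fml σ Unit) (u : S.U) :
    Fml σ Empty :=
  .ex ((node u).map (fun _ => (none : Option Empty)))

/-- The totality formula `∀ w : ⋁_i node_{u_i}(w)`. -/
noncomputable def xiTotal {σ : Voc} (S : Str3 σ) [Fintype S.U] (node : S.U → Fml σ Unit) :
    Fml σ Empty :=
  Fml.all (Fml.disj
    (((Finset.univ : Finset S.U).toList).map
      (fun u => (node u).map (fun _ => (none : Option Empty)))))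

/-- The nullary characteristic formula `⋀_{p nullary} p^{ι^S(p)()}`. -/
noncomputable def xiNullary {σ : Voc} [Fintype σ.rel] (S : Str3 σ) : Fml σ Empty :=
  Fml.conj
    (((Finset.univ : Finset σ.rel).toList).map (fun p =>
      if h : σ.ar p = 0 then
        charFml p (fun i => Fin.elim0 (Fin.cast h i))
          (S.ι p (fun i => Fin.elim0 (Fin.cast h i)))
      else .tru))

/-- The predicate characteristic formula
`∀ w1 … wr : ⋀_{tuples ū} ((⋀_j node_{ū j}(w_j)) → p^{ι^S(p)(ū)}(w̄))`. -/
noncomputable def xiPred {σ : Voc} (S : Str3 σ) [Fintype S.U] (node : S.U → Fml σ Unit)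
    (p : σ.rel) : Fml σ Empty :=
  closeAll (Fml.conj
    (((Finset.univ : Finset (Fin (σ.ar p) → S.U)).toList).map
      (fun t => Fml.imp (nodeTuple S node t)
        (charFml p (fun j => j) (S.ι p t)))))

/-- Conjunction of the predicate characteristic formulas over all predicates of
arity ≥ 1. -/
noncomputable def xiPredAll {σ : Voc} [Fintype σ.rel] (S : Str3 σ) [Fintype S.U]
    (node : S.U → Fml σ Unit) : Fml σ Empty :=
  Fml.conj
    (((Finset.univ : Finset σ.rel).toList).map (fun p =>
      if σ.ar p = 0 then .tru else xiPred S node p))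

/-- The first-order characteristic formula `ξ^S` of `S` (w.r.t. the node
formulas `node`). -/
noncomputable def xi {σ : Voc} [Fintype σ.rel] (S : Str3 σ) [Fintype S.U]
    (node : S.U → Fml σ Unit) : Fml σ Empty :=
  (Fml.conj (((Finset.univ : Finset S.U).toList).map (existsNode S node))).and
    ((xiTotal S node).and ((xiNullary S).and (xiPredAll S node)))

/-- The concretization `γ(S)`: the 2-valued structures that embed into `S` and
satisfy the integrity formula `F`. -/
def gammaSet {σ : Voc} (F : Fml σ Empty) (S : Str3 σ) : Set (Str2 σ) :=
  {C | (∃ f : C.U → S.U, Embeds C S f) ∧ SatC C F}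

/-- `S` is the canonical abstraction of the 2-valued structure `C` via `blur`:
`blur` is a surjective embedding that identifies exactly the concrete nodes with
equal canonical names (the values of the unary predicates), and every abstract
predicate value is the join of the concrete values it represents. -/
def IsCanonAbs {σ : Voc} (C : Str2 σ) (S : Str3 σ) (blur : C.U → S.U) : Prop :=
  Embeds C S blur ∧
    (∀ u v : C.U, blur u = blur v ↔
      ∀ p : σ.rel, σ.ar p = 1 → C.ι p (fun _ => u) = C.ι p (fun _ => v)) ∧
    ∀ (p : σ.rel) (t' : Fin (σ.ar p) → S.U),
      TV.IsJoin {b | ∃ t : Fin (σ.ar p) → C.U, blur ∘ t = t' ∧ C.tv p t = b}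
        (S.ι p t')

/-- `S` is an image of canonical abstraction. -/
def ICA {σ : Voc} (S : Str3 σ) : Prop :=
  ∃ (C : Str2 σ) (blur : C.U → S.U), IsCanonAbs C S blur

/-- The concretization of `S` under canonical abstraction. -/
def gammaC {σ : Voc} (F : Fml σ Empty) (S : Str3 σ) : Set (Str2 σ) :=
  {C | (∃ blur : C.U → S.U, IsCanonAbs C S blur) ∧ SatC C F}

/-- `node` is a family of node formulas witnessing canonical-FO-identifiability
of `S`. -/
def IsCanonNodeFamily {σ : Voc} (S : Str3 σ) (node : S.U → Fml σ Unit) : Prop :=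
  ∀ (C : Str2 σ) (blur : C.U → S.U), IsCanonAbs C S blur →
    ∀ (uh : C.U) (u : S.U), blur uh = u ↔ C.Sat (fun _ => uh) (node u)

/-- `τ^S[p]`: for every tuple where `p` has value 1/2, there are concrete
tuples (satisfying the node formulas) on which `p` holds, resp., fails. -/
noncomputable def tauPred {σ : Voc} (S : Str3 σ) [Fintype S.U] (node : S.U → Fml σ Unit)
    (p : σ.rel) : Fml σ Empty :=
  Fml.conj
    (((((Finset.univ : Finset (Fin (σ.ar p) → S.U)).toList).filter
        (fun t => decide (S.ι p t = TV.half))).map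
      (fun t =>
        (closeEx ((nodeTuple S node t).and (.atom p (fun j => j)))).and
          (closeEx ((nodeTuple S node t).and (.not (.atom p (fun j => j))))))))

/-- `τ^S := ξ^S ∧ ⋀_{p of arity ≥ 2} τ^S[p]`. -/
noncomputable def tau {σ : Voc} [Fintype σ.rel] (S : Str3 σ) [Fintype S.U]
    (node : S.U → Fml σ Unit) : Fml σ Empty :=
  (xi S node).and
    (Fml.conj (((Finset.univ : Finset σ.rel).toList).map (fun p =>
      if 2 ≤ σ.ar p then tauPred S node p else .tru)))

/-- Isomorphism of 3-valued structures. -/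
def Iso3 {σ : Voc} (S1 S2 : Str3 σ) : Prop :=
  ∃ e : S1.U ≃ S2.U,
    ∀ (p : σ.rel) (t : Fin (σ.ar p) → S1.U), S1.ι p t = S2.ι p (e ∘ t)

/-- Satisfaction of the NP (existential monadic second-order) characteristic
formula `ψ^S` of `S` in the 2-valued structure `C`: there exist sets `V_u`
(one per node `u` of `S`) that are nonempty, pairwise disjoint, and cover `C`,
such that the nullary and the predicate characteristic conjuncts hold with
`node_{u}(w) := w ∈ V_u`. -/
def SatNP {σ : Voc} (S : Str3 σ) (C : Str2 σ) : Prop :=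
  ∃ V : S.U → Set C.U,
    (∀ u : S.U, ∃ w, w ∈ V u) ∧
    (∀ u1 u2 : S.U, u1 ≠ u2 →
      ∀ w1 ∈ V u1, ∀ w2 ∈ V u2, ¬ C.ι σ.eqr (pair w1 w2) = true) ∧
    (∀ w : C.U, ∃ u : S.U, w ∈ V u) ∧
    (∀ (p : σ.rel) (h : σ.ar p = 0),
      TV.le (C.tv p (fun i => Fin.elim0 (Fin.cast h i)))
        (S.ι p (fun i => Fin.elim0 (Fin.cast h i)))) ∧
    (∀ (p : σ.rel), 1 ≤ σ.ar p →
      ∀ (t : Fin (σ.ar p) → C.U) (us : Fin (σ.ar p) → S.U),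
        (∀ j, t j ∈ V (us j)) → TV.le (C.tv p t) (S.ι p us))


variable {σ : Voc}

theorem TV.le_refl (a : TV) : TV.le a a := Or.inl rfl
theorem TV.le_half (a : TV) : TV.le a TV.half := Or.inr rfl
theorem TV.le_one_iff {a : TV} : TV.le a TV.one ↔ a = TV.one := by
  constructor
  · rintro (rfl | h) <;> simp_all [TV.le]
  · rintro rfl; exact TV.le_refl _
theorem TV.le_zero_iff {a : TV} : TV.le a TV.zero ↔ a = TV.zero := by
  constructor
  · rintro (rfl | h) <;> simp_all [TV.le]
  · rintro rfl; exact TV.le_refl _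
theorem TV.le_def {a b : TV} (hb : b ≠ TV.half) (h : TV.le a b) : a = b := by
  rcases h with rfl | h; · rfl
  · exact absurd h hb
theorem TV.join_unique {A : Set TV} {v1 v2 : TV} (h1 : TV.IsJoin A v1)
    (h2 : TV.IsJoin A v2) : v1 = v2 := by
  have a := h1.2 v2 h2.1
  have b := h2.2 v1 h1.1
  rcases a with rfl | rfl
  · rfl
  · rcases b with rfl | rfl <;> rfl
theorem Str2.tv_ne_half {C : Str2 σ} {r : σ.rel} {t : Fin (σ.ar r) → C.U} :
    C.tv r t ≠ TV.half := by
  unfold Str2.tv; split <;> simp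
theorem Str2.tv_eq_one {C : Str2 σ} {r : σ.rel} {t : Fin (σ.ar r) → C.U} :
    C.tv r t = TV.one ↔ C.ι r t = true := by
  unfold Str2.tv; split <;> simp_all
theorem Str2.tv_eq_zero {C : Str2 σ} {r : σ.rel} {t : Fin (σ.ar r) → C.U} :
    C.tv r t = TV.zero ↔ C.ι r t = false := by
  unfold Str2.tv; split <;> simp_all

theorem Str2.sat_congr {C : Str2 σ} {V : Type} {ρ1 ρ2 : V → C.U} (h : ρ1 = ρ2)
    (φ : Fml σ V) : C.Sat ρ1 φ ↔ C.Sat ρ2 φ := by rw [h]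

theorem Str2.sat_map {C : Str2 σ} : ∀ {V W : Type} (g : V → W) (ρ : W → C.U)
    (φ : Fml σ V), C.Sat ρ (φ.map g) ↔ C.Sat (ρ ∘ g) φ := by
  intro V W g ρ φ
  induction φ generalizing W with
  | tru => simp [Fml.map, Str2.Sat]
  | atom r ts => simp [Fml.map, Str2.Sat, Function.comp_assoc]
  | not φ ih => simp [Fml.map, Str2.Sat, ih]
  | or φ ψ ih1 ih2 => simp [Fml.map, Str2.Sat, ih1, ih2]
  | ex φ ih =>
      simp only [Fml.map, Str2.Sat, ih]
      refine exists_congr fun m => Str2.sat_congr ?_ _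
      funext v; cases v <;> rfl
  | tc φ a b ih =>
      simp only [Fml.map, Str2.Sat]
      have key : ∀ x y : C.U,
          (C.Sat (fun v => Option.elim v y fun v' => Option.elim v' x ρ)
            (φ.map (Option.map (Option.map g)))) ↔
          (C.Sat (fun v => Option.elim v y fun v' => Option.elim v' x (ρ ∘ g)) φ) := by
        intro x y
        rw [ih]
        refine Str2.sat_congr ?_ _
        funext v; rcases v with _ | (_ | v) <;> rfl
      constructor <;> intro h <;> refine Relation.TransGen.mono (show ∀ x y, _ → _ from fun x y hxy => ?_) _ _ h
      · exact (key x y).1 hxy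
      · exact (key x y).2 hxy

theorem Str2.sat_and {C : Str2 σ} {V : Type} {ρ : V → C.U} {φ ψ : Fml σ V} :
    C.Sat ρ (φ.and ψ) ↔ C.Sat ρ φ ∧ C.Sat ρ ψ := by
  simp only [Fml.and, Str2.Sat]; tauto
theorem Str2.sat_imp {C : Str2 σ} {V : Type} {ρ : V → C.U} {φ ψ : Fml σ V} :
    C.Sat ρ (φ.imp ψ) ↔ (C.Sat ρ φ → C.Sat ρ ψ) := by
  simp only [Fml.imp, Str2.Sat]; tauto
theorem Str2.sat_all {C : Str2 σ} {V : Type} {ρ : V → C.U} {φ : Fml σ (Option V)} :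
    C.Sat ρ (Fml.all φ) ↔ ∀ m : C.U, C.Sat (fun v => Option.elim v m ρ) φ := by
  simp [Fml.all, Str2.Sat]
theorem Str2.sat_conj {C : Str2 σ} {V : Type} {ρ : V → C.U} {l : List (Fml σ V)} :
    C.Sat ρ (Fml.conj l) ↔ ∀ φ ∈ l, C.Sat ρ φ := by
  induction l with
  | nil => simp [Fml.conj, Str2.Sat]
  | cons a l ih =>
      simp only [Fml.conj, List.foldr_cons] at *
      rw [show (List.foldr Fml.and Fml.tru l) = Fml.conj l from rfl] at *
      rw [Str2.sat_and, ih]; simp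
theorem Str2.sat_disj {C : Str2 σ} {V : Type} {ρ : V → C.U} {l : List (Fml σ V)} :
    C.Sat ρ (Fml.disj l) ↔ ∃ φ ∈ l, C.Sat ρ φ := by
  induction l with
  | nil => simp [Fml.disj, Fml.fls, Str2.Sat]
  | cons a l ih =>
      simp only [Fml.disj, List.foldr_cons] at *
      rw [show (List.foldr Fml.or Fml.fls l) = Fml.disj l from rfl] at *
      rw [show C.Sat ρ (Fml.or a (Fml.disj l)) ↔ _ ∨ _ from Iff.rfl, ih]; simp

theorem Str2.sat_closeAll {C : Str2 σ} : ∀ {n : ℕ} (ρE : Empty → C.U)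
    (φ : Fml σ (Fin n)), C.Sat ρE (closeAll φ) ↔ ∀ ρ : Fin n → C.U, C.Sat ρ φ := by
  intro n
  induction n with
  | zero =>
      intro ρE φ
      rw [show closeAll φ = φ.map Fin.elim0 from rfl, Str2.sat_map]
      constructor
      · intro h ρ; exact (Str2.sat_congr (funext fun i => i.elim0) _).1 h
      · intro h; exact h _
  | succ n ih =>
      intro ρE φ
      rw [show closeAll φ = closeAll (Fml.all (φ.map
        (fun i => Fin.lastCases none (fun j => some j) i))) from rfl, ih]
      constructor
      · intro h ρ
        have := (Str2.sat_all.1 (h (ρ ∘ Fin.castSucc))) (ρ (Fin.last n))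
        rw [Str2.sat_map] at this
        refine (Str2.sat_congr ?_ _).1 this
        funext i
        refine Fin.lastCases ?_ ?_ i
        · simp
        · intro j; simp
      · intro h ρ'
        rw [Str2.sat_all]
        intro m
        rw [Str2.sat_map]
        exact h _

theorem Str2.sat_closeEx {C : Str2 σ} : ∀ {n : ℕ} (ρE : Empty → C.U)
    (φ : Fml σ (Fin n)), C.Sat ρE (closeEx φ) ↔ ∃ ρ : Fin n → C.U, C.Sat ρ φ := by
  intro n
  induction n with
  | zero =>
      intro ρE φ
      rw [show closeEx φ = φ.map Fin.elim0 from rfl, Str2.sat_map]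
      constructor
      · intro h; exact ⟨_, h⟩
      · rintro ⟨ρ, h⟩; exact (Str2.sat_congr (funext fun i => i.elim0) _).1 h
  | succ n ih =>
      intro ρE φ
      rw [show closeEx φ = closeEx (Fml.ex (φ.map
        (fun i => Fin.lastCases none (fun j => some j) i))) from rfl, ih]
      constructor
      · rintro ⟨ρ, h⟩
        obtain ⟨m, hm⟩ := h
        rw [Str2.sat_map] at hm
        exact ⟨_, hm⟩
      · rintro ⟨ρ', h⟩
        refine ⟨ρ' ∘ Fin.castSucc, ⟨ρ' (Fin.last n), ?_⟩⟩
        rw [Str2.sat_map]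
        refine (Str2.sat_congr ?_ _).2 h
        funext i
        refine Fin.lastCases ?_ ?_ i
        · simp
        · intro j; simp


variable {σ : Voc}

/-- Semantics of `charFml` for a 2-valued structure. -/
theorem sat_charFml {C : Str2 σ} {V : Type} {ρ : V → C.U} {p : σ.rel}
    {ts : Fin (σ.ar p) → V} {b : TV} :
    C.Sat ρ (charFml p ts b) ↔ TV.le (C.tv p (ρ ∘ ts)) b := by
  cases b with
  | zero =>
      show ¬ (C.ι p (ρ ∘ ts) = true) ↔ _
      rw [TV.le_zero_iff, Str2.tv_eq_zero]
      simp
  | half => simp [charFml, Str2.Sat, TV.le_half]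
  | one =>
      show (C.ι p (ρ ∘ ts) = true) ↔ _
      rw [TV.le_one_iff, Str2.tv_eq_one]

/-- Semantics of the bounded node formula. -/
theorem sat_boundedNode [Fintype σ.rel] {C : Str2 σ} {S : Str3 σ} {uh : C.U} {u : S.U} :
    C.Sat (fun _ => uh) (boundedNode S u) ↔
      ∀ p : σ.rel, σ.ar p = 1 →
        TV.le (C.tv p (fun _ => uh)) (S.ι p (fun _ => u)) := by
  unfold boundedNode
  rw [Str2.sat_conj]
  constructor
  · intro h p hp
    have := h (charFml p (fun _ => ()) (S.ι p (fun _ => u)))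
      (List.mem_map.2 ⟨⟨p, hp⟩, by simp, rfl⟩)
    rw [sat_charFml] at this
    exact this
  · intro h φ hφ
    obtain ⟨q, -, rfl⟩ := List.mem_map.1 hφ
    rw [sat_charFml]
    exact h q.1 q.2

/-- All tuples over `Fin n` with `n = 1` are constant. -/
theorem unary_tuple_const {α : Type} {n : ℕ} (h : n = 1) (t : Fin n → α) :
    t = fun _ => t ⟨0, h ▸ Nat.one_pos⟩ := by
  funext j
  congr 1
  subst h
  exact Subsingleton.elim _ _

section CanonAbs
variable {C : Str2 σ} {S : Str3 σ} {blur : C.U → S.U}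

theorem IsCanonAbs.unary_eq (h : IsCanonAbs C S blur) {p : σ.rel} (hp : σ.ar p = 1)
    (w : C.U) : S.ι p (fun _ => blur w) = C.tv p (fun _ => w) := by
  obtain ⟨hemb, hname, hjoin⟩ := h
  have hj := hjoin p (fun _ => blur w)
  set b := C.tv p (fun _ => w) with hb
  have hmem : b ∈ {b | ∃ t : Fin (σ.ar p) → C.U, blur ∘ t = (fun _ => blur w) ∧ C.tv p t = b} :=
    ⟨fun _ => w, rfl, rfl⟩
  have hub : ∀ a ∈ {b | ∃ t : Fin (σ.ar p) → C.U, blur ∘ t = (fun _ => blur w) ∧ C.tv p t = b},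
      TV.le a b := by
    rintro a ⟨t, ht, rfl⟩
    have h0 : blur (t ⟨0, hp ▸ Nat.one_pos⟩) = blur w := congrFun ht ⟨0, hp ▸ Nat.one_pos⟩
    have := (hname _ _).1 h0 p hp
    have htc : C.tv p t = C.tv p (fun _ => t ⟨0, hp ▸ Nat.one_pos⟩) := by
      rw [← unary_tuple_const hp t]
    rw [htc]
    unfold Str2.tv
    rw [this]
    exact TV.le_refl _
  have h2 := hj.2 b hub
  exact TV.le_def Str2.tv_ne_half h2

theorem IsCanonAbs.unary_ne_half (h : IsCanonAbs C S blur) {p : σ.rel} (hp : σ.ar p = 1)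
    (u : S.U) : S.ι p (fun _ => u) ≠ TV.half := by
  obtain ⟨w, rfl⟩ := h.1.1 u
  rw [h.unary_eq hp w]
  exact Str2.tv_ne_half

theorem IsCanonAbs.bounded (h : IsCanonAbs C S blur) : Bounded S := by
  intro u1 u2 hne
  obtain ⟨w1, rfl⟩ := h.1.1 u1
  obtain ⟨w2, rfl⟩ := h.1.1 u2
  have : ¬ ∀ p : σ.rel, σ.ar p = 1 → C.ι p (fun _ => w1) = C.ι p (fun _ => w2) := by
    intro hall
    exact hne ((h.2.1 w1 w2).2 hall)
  push_neg at this
  obtain ⟨p, hp, hpe⟩ := this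
  refine ⟨p, hp, ?_, h.unary_ne_half hp _, h.unary_ne_half hp _⟩
  rw [h.unary_eq hp w1, h.unary_eq hp w2]
  unfold Str2.tv
  cases hc1 : C.ι p (fun _ => w1) <;> cases hc2 : C.ι p (fun _ => w2) <;> simp_all

/-- `boundedNode` is a canonical node family. -/
theorem IsCanonAbs.node [Fintype σ.rel] (h : IsCanonAbs C S blur) (uh : C.U) (u : S.U) :
    blur uh = u ↔ C.Sat (fun _ => uh) (boundedNode S u) := by
  rw [sat_boundedNode]
  constructor
  · rintro rfl p hp
    rw [h.unary_eq hp uh]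
    exact TV.le_refl _
  · intro hle
    by_contra hne
    obtain ⟨p, hp, hpne, hd1, hd2⟩ := h.bounded (blur uh) u hne
    have e1 : C.tv p (fun _ => uh) = S.ι p (fun _ => blur uh) := (h.unary_eq hp uh).symm
    have e2 : C.tv p (fun _ => uh) = S.ι p (fun _ => u) := TV.le_def hd2 (hle p hp)
    exact hpne (e1 ▸ e2)

end CanonAbs

/-- Mutual exclusivity of bounded node formulas under boundedness. -/
theorem boundedNode_mutexcl [Fintype σ.rel] {S : Str3 σ} (hb : Bounded S)
    {C : Str2 σ} {uh : C.U} {u1 u2 : S.U} (hne : u1 ≠ u2)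
    (h1 : C.Sat (fun _ => uh) (boundedNode S u1))
    (h2 : C.Sat (fun _ => uh) (boundedNode S u2)) : False := by
  rw [sat_boundedNode] at h1 h2
  obtain ⟨p, hp, hpne, hd1, hd2⟩ := hb u1 u2 hne
  exact hpne ((TV.le_def hd1 (h1 p hp)).symm.trans (TV.le_def hd2 (h2 p hp)))


variable {σ : Voc}

theorem sat_nodeTuple {C : Str2 σ} {S : Str3 σ} {node : S.U → Fml σ Unit} {n : ℕ}
    {t : Fin n → S.U} {ρ : Fin n → C.U} :
    C.Sat ρ (nodeTuple S node t) ↔ ∀ j, C.Sat (fun _ => ρ j) (node (t j)) := by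
  unfold nodeTuple
  rw [Str2.sat_conj]
  constructor
  · intro h j
    have := h _ (List.mem_ofFn.2 ⟨j, rfl⟩)
    rw [Str2.sat_map] at this
    exact this
  · intro h φ hφ
    obtain ⟨j, rfl⟩ := List.mem_ofFn.1 hφ
    rw [Str2.sat_map]
    exact h j

section L1
variable {C : Str2 σ} {S : Str3 σ} {blur : C.U → S.U}

theorem IsCanonAbs.half_witness (h : IsCanonAbs C S blur) {p : σ.rel}
    {t' : Fin (σ.ar p) → S.U} (hh : S.ι p t' = TV.half) :
    (∃ t, blur ∘ t = t' ∧ C.ι p t = true) ∧ (∃ t, blur ∘ t = t' ∧ C.ι p t = false) := by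
  have hj := h.2.2 p t'
  rw [hh] at hj
  constructor
  · by_contra hno
    push_neg at hno
    have : ∀ a ∈ {b | ∃ t : Fin (σ.ar p) → C.U, blur ∘ t = t' ∧ C.tv p t = b},
        TV.le a TV.zero := by
      rintro a ⟨t, ht, rfl⟩
      rw [TV.le_zero_iff, Str2.tv_eq_zero]
      cases hb : C.ι p t with
      | true => exact absurd hb (hno t ht)
      | false => rfl
    have := hj.2 _ this
    rcases this with h' | h' <;> simp_all
  · by_contra hno
    push_neg at hno
    have : ∀ a ∈ {b | ∃ t : Fin (σ.ar p) → C.U, blur ∘ t = t' ∧ C.tv p t = b},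
        TV.le a TV.one := by
      rintro a ⟨t, ht, rfl⟩
      rw [TV.le_one_iff, Str2.tv_eq_one]
      cases hb : C.ι p t with
      | false => exact absurd hb (hno t ht)
      | true => rfl
    have := hj.2 _ this
    rcases this with h' | h' <;> simp_all

theorem tau_of_canonAbs [Fintype σ.rel] [Fintype S.U] (h : IsCanonAbs C S blur) :
    SatC C (tau S (boundedNode S)) := by
  have hnode := fun uh u => h.node uh u
  unfold tau SatC
  rw [Str2.sat_and]
  constructor
  · -- ξ
    unfold xi
    rw [Str2.sat_and, Str2.sat_conj]
    refine ⟨?_, ?_⟩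
    · -- existsNode
      intro φ hφ
      obtain ⟨u, -, rfl⟩ := List.mem_map.1 hφ
      unfold existsNode
      obtain ⟨w, hw⟩ := h.1.1 u
      refine ⟨w, ?_⟩
      rw [Str2.sat_map]
      exact (hnode w u).1 hw
    rw [Str2.sat_and]
    constructor
    · -- total
      unfold xiTotal
      rw [Str2.sat_all]
      intro m
      rw [Str2.sat_disj]
      refine ⟨(boundedNode S (blur m)).map (fun _ => (none : Option Empty)), ?_, ?_⟩
      · exact List.mem_map.2 ⟨blur m, by simp, rfl⟩
      · rw [Str2.sat_map]
        exact (hnode m (blur m)).1 rfl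
    rw [Str2.sat_and]
    constructor
    · -- nullary
      unfold xiNullary
      rw [Str2.sat_conj]
      intro φ hφ
      obtain ⟨p, -, rfl⟩ := List.mem_map.1 hφ
      by_cases hp : σ.ar p = 0
      · rw [dif_pos hp, sat_charFml]
        have := h.1.2 p ((fun x : Empty => x.elim) ∘ (fun i => Fin.elim0 (Fin.cast hp i)))
        have he : blur ∘ ((fun x : Empty => x.elim) ∘ (fun i => Fin.elim0 (Fin.cast hp i)))
            = (fun i => Fin.elim0 (Fin.cast hp i)) := by
          funext i
          exact (Fin.elim0 (Fin.cast hp i) : Empty).elim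
        rw [he] at this
        exact this
      · rw [dif_neg hp]
        trivial
    · -- xiPredAll
      unfold xiPredAll
      rw [Str2.sat_conj]
      intro φ hφ
      obtain ⟨p, -, rfl⟩ := List.mem_map.1 hφ
      by_cases hp : σ.ar p = 0
      · rw [if_pos hp]; trivial
      rw [if_neg hp]
      unfold xiPred
      rw [Str2.sat_closeAll]
      intro ρ
      rw [Str2.sat_conj]
      intro ψ hψ
      obtain ⟨t', -, rfl⟩ := List.mem_map.1 hψ
      rw [Str2.sat_imp]
      intro hnt
      rw [sat_nodeTuple] at hnt
      have hbt : blur ∘ ρ = t' := by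
        funext j
        exact (hnode (ρ j) (t' j)).2 (hnt j)
      rw [sat_charFml]
      have hre : (ρ ∘ fun j => j) = ρ := rfl
      rw [hre, ← hbt]
      exact h.1.2 p ρ
  · -- tauPred conjuncts
    rw [Str2.sat_conj]
    intro φ hφ
    obtain ⟨p, -, rfl⟩ := List.mem_map.1 hφ
    by_cases hp : 2 ≤ σ.ar p
    swap
    · rw [if_neg hp]; trivial
    rw [if_pos hp]
    unfold tauPred
    rw [Str2.sat_conj]
    intro ψ hψ
    obtain ⟨t', ht', rfl⟩ := List.mem_map.1 hψ
    have hhalf : S.ι p t' = TV.half := by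
      have := (List.mem_filter.1 ht').2
      simpa using this
    obtain ⟨⟨t1, hb1, hι1⟩, ⟨t0, hb0, hι0⟩⟩ := h.half_witness hhalf
    rw [Str2.sat_and]
    constructor
    · rw [Str2.sat_closeEx]
      refine ⟨t1, ?_⟩
      rw [Str2.sat_and, sat_nodeTuple]
      refine ⟨fun j => (hnode (t1 j) (t' j)).1 (congrFun hb1 j), ?_⟩
      show C.ι p (t1 ∘ fun j => j) = true
      exact hι1
    · rw [Str2.sat_closeEx]
      refine ⟨t0, ?_⟩
      rw [Str2.sat_and, sat_nodeTuple]
      refine ⟨fun j => (hnode (t0 j) (t' j)).1 (congrFun hb0 j), ?_⟩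
      show C.ι p (t0 ∘ fun j => j) = true → False
      rw [show (t0 ∘ fun j => j) = t0 from rfl, hι0]
      simp

end L1

variable {σ : Voc}

/-- Empty tuples are all equal. -/
theorem empty_tuple_eq {α : Type} {n : ℕ} (h : n = 0) (t1 t2 : Fin n → α) : t1 = t2 := by
  subst h; funext i; exact i.elim0

theorem IsCanonAbs.nullary_ne_half {C : Str2 σ} {S : Str3 σ} {blur : C.U → S.U}
    (h : IsCanonAbs C S blur) {p : σ.rel} (hp : σ.ar p = 0) (t' : Fin (σ.ar p) → S.U) :
    S.ι p t' ≠ TV.half := by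
  have hj := h.2.2 p t'
  set t0 : Fin (σ.ar p) → C.U := fun i => (Fin.cast hp i).elim0 with ht0
  have hmem : C.tv p t0 ∈ {b | ∃ t : Fin (σ.ar p) → C.U, blur ∘ t = t' ∧ C.tv p t = b} :=
    ⟨t0, empty_tuple_eq hp _ _, rfl⟩
  have hub : ∀ a ∈ {b | ∃ t : Fin (σ.ar p) → C.U, blur ∘ t = t' ∧ C.tv p t = b},
      TV.le a (C.tv p t0) := by
    rintro a ⟨t, -, rfl⟩
    rw [empty_tuple_eq hp t t0]
    exact TV.le_refl _
  have := TV.le_def Str2.tv_ne_half (hj.2 _ hub)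
  rw [this]
  exact Str2.tv_ne_half

theorem ICA.ne_half_of_le_one {S : Str3 σ} (h : ICA S) {p : σ.rel} (hp : σ.ar p ≤ 1)
    (t' : Fin (σ.ar p) → S.U) : S.ι p t' ≠ TV.half := by
  obtain ⟨C0, blur0, h0⟩ := h
  rcases Nat.le_one_iff_eq_zero_or_eq_one.1 hp with hh | hh
  · exact h0.nullary_ne_half hh t'
  · rw [unary_tuple_const hh t']
    exact h0.unary_ne_half hh _

/-- Soundness: if an ICA structure's tau formula is satisfied by `C`, then `S`
is a canonical abstraction of `C`. -/
theorem canonAbs_of_tau [Fintype σ.rel] {S : Str3 σ} [Fintype S.U] (hICA : ICA S)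
    {C : Str2 σ} (hτ : SatC C (tau S (boundedNode S))) :
    ∃ blur : C.U → S.U, IsCanonAbs C S blur := by
  have hbd : Bounded S := by obtain ⟨C0, b0, h0⟩ := hICA; exact h0.bounded
  unfold tau SatC at hτ
  rw [Str2.sat_and] at hτ
  obtain ⟨hξ, hτp⟩ := hτ
  unfold xi at hξ
  rw [Str2.sat_and, Str2.sat_and, Str2.sat_and] at hξ
  obtain ⟨hex, htot, hnul, hpred⟩ := hξ
  rw [Str2.sat_conj] at hex
  -- every concrete node satisfies some node formula
  have htot' : ∀ w : C.U, ∃ u : S.U, C.Sat (fun _ => w) (boundedNode S u) := by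
    intro w
    unfold xiTotal at htot
    rw [Str2.sat_all] at htot
    have := htot w
    rw [Str2.sat_disj] at this
    obtain ⟨φ, hφ, hsat⟩ := this
    obtain ⟨u, -, rfl⟩ := List.mem_map.1 hφ
    rw [Str2.sat_map] at hsat
    exact ⟨u, hsat⟩
  classical
  set blur : C.U → S.U := fun w => Classical.choose (htot' w) with hblurdef
  have hblur_sat : ∀ w, C.Sat (fun _ => w) (boundedNode S (blur w)) :=
    fun w => Classical.choose_spec (htot' w)
  have hblur_iff : ∀ (w : C.U) (u : S.U),
      blur w = u ↔ C.Sat (fun _ => w) (boundedNode S u) := by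
    intro w u
    constructor
    · rintro rfl; exact hblur_sat w
    · intro hs
      by_contra hne
      exact boundedNode_mutexcl hbd hne (hblur_sat w) hs
  have hsurj : Function.Surjective blur := by
    intro u
    have := hex _ (List.mem_map.2 ⟨u, by simp, rfl⟩)
    unfold existsNode at this
    obtain ⟨w, hw⟩ := this
    rw [Str2.sat_map] at hw
    exact ⟨w, (hblur_iff w u).2 hw⟩
  have hle : ∀ (r : σ.rel) (t : Fin (σ.ar r) → C.U),
      TV.le (C.tv r t) (S.ι r (blur ∘ t)) := by
    intro r t
    by_cases hr : σ.ar r = 0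
    · unfold xiNullary at hnul
      rw [Str2.sat_conj] at hnul
      have := hnul _ (List.mem_map.2 ⟨r, by simp, rfl⟩)
      rw [dif_pos hr, sat_charFml] at this
      have e1 : ((fun x : Empty => x.elim) ∘ (fun i => Fin.elim0 (Fin.cast hr i))) = t :=
        empty_tuple_eq hr _ _
      have e2 : (fun i => Fin.elim0 (Fin.cast hr i)) = blur ∘ t := empty_tuple_eq hr _ _
      rw [e1, e2] at this
      exact this
    · unfold xiPredAll at hpred
      rw [Str2.sat_conj] at hpred
      have := hpred _ (List.mem_map.2 ⟨r, by simp, rfl⟩)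
      rw [if_neg hr] at this
      unfold xiPred at this
      rw [Str2.sat_closeAll] at this
      have h2 := this t
      rw [Str2.sat_conj] at h2
      have h3 := h2 _ (List.mem_map.2 ⟨blur ∘ t, by simp, rfl⟩)
      rw [Str2.sat_imp] at h3
      have h4 := h3 (sat_nodeTuple.2 (fun j => hblur_sat (t j)))
      rw [sat_charFml] at h4
      exact h4
  have hemb : Embeds C S blur := ⟨hsurj, hle⟩
  have hunary : ∀ (p : σ.rel), σ.ar p = 1 → ∀ w : C.U,
      C.tv p (fun _ => w) = S.ι p (fun _ => blur w) := by
    intro p hp w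
    have := hle p (fun _ => w)
    refine TV.le_def (hICA.ne_half_of_le_one (by omega) _) ?_
    convert this using 2
    rfl
  refine ⟨blur, hemb, ?_, ?_⟩
  · -- names
    intro u v
    constructor
    · intro he p hp
      have h1 := hunary p hp u
      have h2 := hunary p hp v
      rw [he] at h1
      have := h1.trans h2.symm
      unfold Str2.tv at this
      split_ifs at this with hu hv hv <;> simp_all
    · intro hall
      by_contra hne
      obtain ⟨p, hp, hpne, hd1, hd2⟩ := hbd (blur u) (blur v) hne
      refine hpne ?_
      rw [← hunary p hp u, ← hunary p hp v]
      unfold Str2.tv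
      rw [hall p hp]
  · -- join
    intro p t'
    constructor
    · rintro a ⟨t, rfl, rfl⟩
      exact hle p t
    · intro w hw
      by_cases hh : S.ι p t' = TV.half
      · have har : 2 ≤ σ.ar p := by
          by_contra hc
          exact hICA.ne_half_of_le_one (by omega) t' hh
        rw [Str2.sat_conj] at hτp
        have := hτp _ (List.mem_map.2 ⟨p, by simp, rfl⟩)
        rw [if_pos har] at this
        unfold tauPred at this
        rw [Str2.sat_conj] at this
        have hmem : t' ∈ List.filter (fun t => decide (S.ι p t = TV.half))
            Finset.univ.toList := by
          rw [List.mem_filter]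
          exact ⟨by simp, by simpa using hh⟩
        have h2 := this _ (List.mem_map.2 ⟨t', hmem, rfl⟩)
        rw [Str2.sat_and, Str2.sat_closeEx, Str2.sat_closeEx] at h2
        obtain ⟨⟨t1, ht1⟩, ⟨t0, ht0⟩⟩ := h2
        rw [Str2.sat_and, sat_nodeTuple] at ht1 ht0
        have hb1 : blur ∘ t1 = t' := funext fun j => (hblur_iff _ _).2 (ht1.1 j)
        have hb0 : blur ∘ t0 = t' := funext fun j => (hblur_iff _ _).2 (ht0.1 j)
        have hone : TV.one ∈ {b | ∃ t : Fin (σ.ar p) → C.U, blur ∘ t = t' ∧ C.tv p t = b} := by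
          refine ⟨t1, hb1, ?_⟩
          rw [Str2.tv_eq_one]
          exact ht1.2
        have hzero : TV.zero ∈ {b | ∃ t : Fin (σ.ar p) → C.U, blur ∘ t = t' ∧ C.tv p t = b} := by
          refine ⟨t0, hb0, ?_⟩
          rw [Str2.tv_eq_zero]
          have := ht0.2
          show C.ι p t0 = false
          revert this
          show ¬ (C.ι p (t0 ∘ fun j => j) = true) → _
          rw [show (t0 ∘ fun j => j) = t0 from rfl]
          cases C.ι p t0 <;> simp
        have l1 := hw _ hone
        have l0 := hw _ hzero
        rw [hh]
        rcases l1 with rfl | rfl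
        · rcases l0 with h' | h' <;> simp_all
        · exact TV.le_refl _
      · -- definite value: it is attained
        have hatt : S.ι p t' ∈ {b | ∃ t : Fin (σ.ar p) → C.U, blur ∘ t = t' ∧ C.tv p t = b} := by
          set t : Fin (σ.ar p) → C.U := fun j => Classical.choose (hsurj (t' j)) with ht
          have hbt : blur ∘ t = t' := funext fun j => Classical.choose_spec (hsurj (t' j))
          refine ⟨t, hbt, ?_⟩
          have := hle p t
          rw [hbt] at this
          exact TV.le_def hh this
        exact hw _ hatt


variable {σ : Voc}

/-- Transport of canonical abstraction along a shared concretization. -/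
theorem canonAbs_transfer {C C' : Str2 σ} {S1 S2 : Str3 σ}
    {b1 : C.U → S1.U} {b1' : C'.U → S1.U} {b2' : C'.U → S2.U}
    (h1 : IsCanonAbs C S1 b1) (h1' : IsCanonAbs C' S1 b1') (h2' : IsCanonAbs C' S2 b2') :
    ∃ b2 : C.U → S2.U, IsCanonAbs C S2 b2 := by
  classical
  set e : S1.U → S2.U := fun u => b2' (Classical.choose (h1'.1.1 u)) with he
  have hsec : ∀ u, b1' (Classical.choose (h1'.1.1 u)) = u := fun u =>
    Classical.choose_spec (h1'.1.1 u)
  have hcomm : ∀ w : C'.U, e (b1' w) = b2' w := by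
    intro w
    apply (h2'.2.1 _ _).2
    apply (h1'.2.1 _ _).1
    rw [hsec]
  have hinj : Function.Injective e := by
    intro u v huv
    have h1n := (h2'.2.1 _ _).1 huv
    have := (h1'.2.1 _ _).2 h1n
    rw [hsec, hsec] at this
    exact this
  have hsurje : Function.Surjective e := by
    intro u2
    obtain ⟨w, rfl⟩ := h2'.1.1 u2
    exact ⟨b1' w, hcomm w⟩
  have hiota : ∀ (p : σ.rel) (t : Fin (σ.ar p) → S1.U), S2.ι p (e ∘ t) = S1.ι p t := by
    intro p t
    have hseteq : {b | ∃ tc : Fin (σ.ar p) → C'.U, b2' ∘ tc = e ∘ t ∧ C'.tv p tc = b}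
        = {b | ∃ tc : Fin (σ.ar p) → C'.U, b1' ∘ tc = t ∧ C'.tv p tc = b} := by
      ext b
      constructor
      · rintro ⟨tc, hct, rfl⟩
        refine ⟨tc, funext fun j => ?_, rfl⟩
        have hj : b2' (tc j) = b2' (Classical.choose (h1'.1.1 (t j))) := congrFun hct j
        have := (h1'.2.1 _ _).2 ((h2'.2.1 _ _).1 hj)
        rw [hsec] at this
        show b1' (tc j) = t j
        exact this
      · rintro ⟨tc, hct, rfl⟩
        refine ⟨tc, funext fun j => ?_, rfl⟩
        have hj : b1' (tc j) = t j := congrFun hct j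
        show b2' (tc j) = e (t j)
        rw [← hj, hcomm]
    have j2 := h2'.2.2 p (e ∘ t)
    rw [hseteq] at j2
    exact TV.join_unique j2 (h1'.2.2 p t)
  set E : S1.U ≃ S2.U := Equiv.ofBijective e ⟨hinj, hsurje⟩ with hE
  have hEe : ∀ u, E u = e u := fun u => rfl
  refine ⟨e ∘ b1, ⟨⟨?_, ?_⟩, ?_, ?_⟩⟩
  · exact hsurje.comp h1.1.1
  · intro r t
    have := h1.1.2 r t
    have hr : (e ∘ b1) ∘ t = e ∘ (b1 ∘ t) := rfl
    rw [hr, hiota r (b1 ∘ t)]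
    exact this
  · intro u v
    rw [show (e ∘ b1) u = (e ∘ b1) v ↔ b1 u = b1 v from ⟨fun hh => hinj hh, fun hh => by
      simp [Function.comp, hh]⟩]
    exact h1.2.1 u v
  · intro p t2'
    set t1' : Fin (σ.ar p) → S1.U := fun j => E.symm (t2' j) with ht1
    have het : e ∘ t1' = t2' := by
      funext j
      show e (E.symm (t2' j)) = t2' j
      rw [← hEe]
      exact E.apply_symm_apply _
    have hseteq : {b | ∃ t : Fin (σ.ar p) → C.U, (e ∘ b1) ∘ t = t2' ∧ C.tv p t = b}
        = {b | ∃ t : Fin (σ.ar p) → C.U, b1 ∘ t = t1' ∧ C.tv p t = b} := by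
      ext b
      constructor
      · rintro ⟨t, hct, rfl⟩
        refine ⟨t, funext fun j => ?_, rfl⟩
        have hj : e (b1 (t j)) = t2' j := congrFun hct j
        have h2 : E (b1 (t j)) = t2' j := hj
        show b1 (t j) = E.symm (t2' j)
        rw [← h2, Equiv.symm_apply_apply]
      · rintro ⟨t, hct, rfl⟩
        refine ⟨t, funext fun j => ?_, rfl⟩
        have hj : b1 (t j) = t1' j := congrFun hct j
        show e (b1 (t j)) = t2' j
        rw [hj]
        exact congrFun het j
    rw [hseteq, ← het, hiota p t1']
    exact h1.2.2 p t1'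


variable {σ : Voc}

/-- Canonical names. -/
def U0 (σ : Voc) : Type := {p : σ.rel // σ.ar p = 1} → Bool

instance [Fintype σ.rel] : Finite (U0 σ) := by
  unfold U0; infer_instance

/-- A 3-valued structure whose universe is a set of canonical names. -/
structure PreStr (σ : Voc) : Type where
  A : Set (U0 σ)
  ι : (r : σ.rel) → (Fin (σ.ar r) → ↥A) → TV
  eq_refl : ∀ u : ↥A, ι σ.eqr (pair u u) ≠ TV.zero
  eq_ne : ∀ u v : ↥A, u ≠ v → ι σ.eqr (pair u v) = TV.zero

def PreStr.toStr3 (d : PreStr σ) : Str3 σ := ⟨↥d.A, d.ι, d.eq_refl, d.eq_ne⟩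

noncomputable instance [Fintype σ.rel] (d : PreStr σ) : Fintype d.toStr3.U := by
  have : Finite d.toStr3.U := by
    show Finite ↥d.A
    exact Subtype.finite
  exact Fintype.ofFinite _

noncomputable def finOf [Fintype σ.rel] (d : PreStr σ) : Fintype d.toStr3.U :=
  inferInstance

section Construction
variable (C : Str2 σ)

/-- The canonical name of a concrete node. -/
def nameOf (w : C.U) : U0 σ := fun p => C.ι p.1 (fun _ => w)

def nameSet : Set (U0 σ) := Set.range (nameOf C)

def blurName (w : C.U) : ↥(nameSet C) := ⟨nameOf C w, w, rfl⟩

open Classical in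
/-- The abstract interpretation: join of concrete values. -/
noncomputable def absIota (r : σ.rel) (t' : Fin (σ.ar r) → ↥(nameSet C)) : TV :=
  if ∃ t, blurName C ∘ t = t' ∧ C.ι r t = true then
    (if ∃ t, blurName C ∘ t = t' ∧ C.ι r t = false then TV.half else TV.one)
  else TV.zero

/-- Every abstract tuple has a concrete preimage tuple. -/
theorem exists_preimage (r : σ.rel) (t' : Fin (σ.ar r) → ↥(nameSet C)) :
    ∃ t : Fin (σ.ar r) → C.U, blurName C ∘ t = t' := by
  classical
  have hch : ∀ j, ∃ w, nameOf C w = (t' j).1 := fun j => (t' j).2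
  refine ⟨fun j => Classical.choose (hch j), funext fun j => ?_⟩
  exact Subtype.ext (Classical.choose_spec (hch j))

theorem absIota_isJoin (r : σ.rel) (t' : Fin (σ.ar r) → ↥(nameSet C)) :
    TV.IsJoin {b | ∃ t, blurName C ∘ t = t' ∧ C.tv r t = b} (absIota C r t') := by
  classical
  constructor
  · rintro a ⟨t, ht, rfl⟩
    unfold absIota
    split_ifs with h1 h2
    · exact TV.le_half _
    · cases hv : C.ι r t with
      | true => rw [Str2.tv_eq_one.2 hv]; exact TV.le_refl _
      | false => exact absurd ⟨t, ht, hv⟩ h2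
    · cases hv : C.ι r t with
      | true => exact absurd ⟨t, ht, hv⟩ h1
      | false => rw [Str2.tv_eq_zero.2 hv]; exact TV.le_refl _
  · intro w hw
    unfold absIota
    split_ifs with h1 h2
    · obtain ⟨t1, ht1, hv1⟩ := h1
      obtain ⟨t0, ht0, hv0⟩ := h2
      have l1 := hw TV.one ⟨t1, ht1, by rw [Str2.tv_eq_one]; exact hv1⟩
      have l0 := hw TV.zero ⟨t0, ht0, by rw [Str2.tv_eq_zero]; exact hv0⟩
      rcases l1 with h' | rfl
      · rcases l0 with h'' | rfl
        · exact absurd (h'.trans h''.symm) (by simp)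
        · exact TV.le_refl _
      · exact TV.le_refl _
    · obtain ⟨t1, ht1, hv1⟩ := h1
      exact hw TV.one ⟨t1, ht1, by rw [Str2.tv_eq_one]; exact hv1⟩
    · obtain ⟨t, ht⟩ := exists_preimage C r t'
      cases hv : C.ι r t with
      | true => exact absurd ⟨t, ht, hv⟩ h1
      | false => exact hw TV.zero ⟨t, ht, by rw [Str2.tv_eq_zero]; exact hv⟩

theorem pair_eq_of_eqr {α : Type} (t : Fin (σ.ar σ.eqr) → α) :
    t = pair (t ⟨0, by rw [σ.eq_ar]; omega⟩) (t ⟨1, by rw [σ.eq_ar]; omega⟩) := by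
  have h2 := σ.eq_ar
  funext i
  unfold pair
  split_ifs with h
  · congr 1
    exact Fin.ext h
  · have : (i : ℕ) = 1 := by
      have := i.2
      omega
    congr 1
    exact Fin.ext this

/-- The canonical abstraction of `C` as a `PreStr`. -/
noncomputable def canonPre : PreStr σ where
  A := nameSet C
  ι := absIota C
  eq_refl := by
    intro u
    classical
    obtain ⟨w, hw⟩ := u.2
    have hbw : blurName C w = u := Subtype.ext hw
    have h1 : ∃ t, blurName C ∘ t = pair u u ∧ C.ι σ.eqr t = true := by
      refine ⟨pair w w, ?_, ?_⟩
      · funext i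
        show blurName C (pair w w i) = pair u u i
        unfold pair
        split_ifs <;> exact hbw
      · rw [(C.eq_iff w w).2 rfl]
    unfold absIota
    rw [if_pos h1]
    split_ifs <;> simp
  eq_ne := by
    intro u v huv
    classical
    unfold absIota
    rw [if_neg]
    rintro ⟨t, ht, htrue⟩
    have hpt := pair_eq_of_eqr t
    set i0 : Fin (σ.ar σ.eqr) := ⟨0, by rw [σ.eq_ar]; omega⟩
    set i1 : Fin (σ.ar σ.eqr) := ⟨1, by rw [σ.eq_ar]; omega⟩
    rw [hpt] at htrue
    have heq : t i0 = t i1 := (C.eq_iff _ _).1 htrue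
    have h0 : blurName C (t i0) = u := by
      have := congrFun ht i0
      simpa [pair, i0] using this
    have h1 : blurName C (t i1) = v := by
      have := congrFun ht i1
      simpa [pair, i1] using this
    exact huv (h0 ▸ heq ▸ h1)

theorem canonPre_isCanonAbs : IsCanonAbs C (canonPre C).toStr3 (blurName C) := by
  refine ⟨⟨?_, ?_⟩, ?_, ?_⟩
  · rintro ⟨n, w, hw⟩
    exact ⟨w, Subtype.ext hw⟩
  · intro r t
    exact (absIota_isJoin C r (blurName C ∘ t)).1 _ ⟨t, rfl, rfl⟩
  · intro u v
    constructor
    · intro he p hp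
      have : nameOf C u = nameOf C v := congrArg Subtype.val he
      have := congrFun this ⟨p, hp⟩
      exact this
    · intro hall
      refine Subtype.ext (funext fun p => ?_)
      exact hall p.1 p.2
  · intro p t'
    exact absIota_isJoin C p t'

theorem canonPre_ICA : ICA (canonPre C).toStr3 :=
  ⟨C, blurName C, canonPre_isCanonAbs C⟩

end Construction

/-- for every ICA structure `S` there is a set (family) `X` of
ICA structures such that `F ∧ ¬τ^S` is satisfied by exactly the same 2-valued
structures as `γ̂_c(X) = F ∧ ⋁_{S' ∈ X} τ^{S'}`: the class of characteristic
formulas for canonical abstraction is closed under negation relative to `F`. -/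
theorem tau_closed_under_negation {σ : Voc} [Fintype σ.rel] (F : Fml σ Empty)
    (S : Str3 σ) [Fintype S.U] (hS : ICA S) :
    ∃ (I : Type) (X : I → Str3 σ) (fin : ∀ i, Fintype (X i).U),
      (∀ i, ICA (X i)) ∧
      ∀ C : Str2 σ,
        SatC C (F.and (Fml.not (tau S (boundedNode S)))) ↔
          (SatC C F ∧
            ∃ i : I, SatC C (@tau σ _ (X i) (fin i) (boundedNode (X i)))) := by
  classical
  refine ⟨{d : PreStr σ // ICA d.toStr3 ∧
      ∀ C' : Str2 σ,
        SatC C' (@tau σ _ d.toStr3 (finOf d) (boundedNode d.toStr3)) →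
          ¬ SatC C' (tau S (boundedNode S))},
    fun i => i.1.toStr3, fun i => finOf i.1, fun i => i.2.1, fun C => ?_⟩
  have hlhs : SatC C (F.and (Fml.not (tau S (boundedNode S)))) ↔
      SatC C F ∧ ¬ SatC C (tau S (boundedNode S)) := by
    unfold SatC
    rw [Str2.sat_and]
    exact Iff.rfl
  rw [hlhs]
  constructor
  · rintro ⟨hF, hnT⟩
    refine ⟨hF, ?_⟩
    have hca := canonPre_isCanonAbs C
    have hICAd := canonPre_ICA C
    have hprop : ∀ C' : Str2 σ,
        SatC C' (@tau σ _ (canonPre C).toStr3 (finOf (canonPre C))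
          (boundedNode (canonPre C).toStr3)) →
        ¬ SatC C' (tau S (boundedNode S)) := by
      intro C' h1 h2
      obtain ⟨b1', h1'⟩ := canonAbs_of_tau hICAd h1
      obtain ⟨b2', h2'⟩ := canonAbs_of_tau hS h2
      obtain ⟨b2, hb2⟩ := canonAbs_transfer hca h1' h2'
      exact hnT (tau_of_canonAbs hb2)
    exact ⟨⟨canonPre C, hICAd, hprop⟩, tau_of_canonAbs hca⟩
  · rintro ⟨hF, i, hi⟩
    exact ⟨hF, i.2.2 C hi⟩

end HeapAbs
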